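/- With the notation of the PGM analysis (full-rank G ∈ F_q^{k×n}, code C, f : F_q^n → ℂ with ‖f‖₂ = 1, W_s = ∑_{y ∈ C_s^⊥} f̂(y) e_y, n_s = ‖W_s‖, and for n_s > 0 the normalized vectors W̃_s = W_s/n_s), define Y_c = q^{-k/2} ∑_{s ∈ F_q^k} χ_c(u_s) W̃_s for c ∈ C. Assuming all n_s > 0, the vectors {Y_c}_{c ∈ C} are pairwise orthonormal, and for every c ∈ C the overlap satisfies ⟨Y_c, ψ̂_c⟩ = q^{-k/2} ∑_{s ∈ F_q^k} n_s, hence |⟨Y_c, ψ̂_c⟩|² = (1/q^k)(∑_s n_s)². -/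

import Mathlib

open scoped BigOperators
open Finset

/-- The additive character `χ_y(x) = exp(2πi·Tr(x·y)/p)` of a finite field `F` of
characteristic `p`, where `Tr` is the (absolute) trace from `F` down to `F_p = ZMod p`. -/
noncomputable def chi1 (F : Type) [Field F] [Fintype F]
    [Algebra (ZMod (ringChar F)) F] (y x : F) : ℂ :=
  Complex.exp (2 * Real.pi * Complex.I *
    ((Algebra.trace (ZMod (ringChar F)) F (x * y)).val : ℂ) / (ringChar F : ℂ))

/-- The character of `F_q^n`, extended multiplicatively: `χ_y(x) = ∏ i, χ_{y i}(x i)`. -/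
noncomputable def chi (F : Type) [Field F] [Fintype F]
    [Algebra (ZMod (ringChar F)) F] (n : ℕ) (y x : Fin n → F) : ℂ :=
  ∏ i, chi1 F (y i) (x i)

/-- The Fourier transform on `F_q^n`: `f̂(x) = q^{-n/2} ∑_y χ_x(y) f(y)`. -/
noncomputable def FT (F : Type) [Field F] [Fintype F]
    [Algebra (ZMod (ringChar F)) F] (n : ℕ) (f : (Fin n → F) → ℂ) :
    (Fin n → F) → ℂ :=
  fun x => (Real.sqrt ((Fintype.card F : ℝ) ^ n) : ℂ)⁻¹ * ∑ y : Fin n → F, chi F n x y * f y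

set_option linter.unusedSectionVars false

section PGMhelpers

variable (F : Type) [Field F] [Fintype F] [Algebra (ZMod (ringChar F)) F]
  [NeZero (ringChar F)]

/-- The canonical additive character of `F`: the standard character of `ZMod p`
composed with the trace. -/
noncomputable def psiF : AddChar F ℂ :=
  (ZMod.stdAddChar (N := ringChar F)).compAddMonoidHom
    (Algebra.trace (ZMod (ringChar F)) F).toAddMonoidHom

theorem chi1_eq_psiF (y x : F) : chi1 F y x = psiF F (x * y) := by
  simp only [chi1, psiF, AddChar.compAddMonoidHom_apply, LinearMap.toAddMonoidHom_coe,
    ZMod.stdAddChar_apply, ZMod.toCircle_apply, Circle.coe_exp]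

theorem psiF_primitive : AddChar.IsPrimitive (psiF F) := by
  intro a ha
  obtain ⟨b, hb⟩ := FiniteField.trace_to_zmod_nondegenerate F ha
  rw [AddChar.ne_one_iff]
  refine ⟨b, ?_⟩
  simp only [AddChar.mulShift_apply, psiF, AddChar.compAddMonoidHom_apply,
    LinearMap.toAddMonoidHom_coe]
  intro h
  apply hb
  have := ZMod.injective_stdAddChar (N := ringChar F)
  have h0 : ZMod.stdAddChar (N := ringChar F) 0 = 1 := AddChar.map_zero_eq_one _
  rw [mul_comm] at hb
  exact this (h.trans h0.symm)

theorem psiF_map_sum {ι : Type} (s : Finset ι) (g : ι → F) :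
    psiF F (∑ i ∈ s, g i) = ∏ i ∈ s, psiF F (g i) := by
  induction s using Finset.cons_induction with
  | empty => simp
  | cons a s ha ih => simp [Finset.sum_cons, Finset.prod_cons, AddChar.map_add_eq_mul, ih]

theorem chi_eq_psiF (n : ℕ) (y x : Fin n → F) :
    chi F n y x = psiF F (dotProduct x y) := by
  rw [chi, dotProduct, psiF_map_sum]
  exact Finset.prod_congr rfl fun i _ => chi1_eq_psiF F (y i) (x i)

theorem conj_psiF_mul (a b : F) :
    (starRingEnd ℂ) (psiF F a) * psiF F b = psiF F (b - a) := by
  have hp : 0 < ringChar F := Nat.pos_of_ne_zero (NeZero.ne _)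
  rw [AddChar.starComp_apply hp, AddChar.inv_apply, ← AddChar.map_add_eq_mul, neg_add_eq_sub]

theorem conj_psiF_self (a : F) : (starRingEnd ℂ) (psiF F a) * psiF F a = 1 := by
  rw [conj_psiF_mul, sub_self, AddChar.map_zero_eq_one]

theorem sum_psiF_dot [DecidableEq F] (k : ℕ) (d : Fin k → F) :
    ∑ s : Fin k → F, psiF F (dotProduct d s) =
      if d = 0 then ((Fintype.card F : ℂ)) ^ k else 0 := by
  simp_rw [dotProduct, psiF_map_sum]
  rw [← Fintype.piFinset_univ,
    ← Finset.prod_univ_sum (fun _ : Fin k => (Finset.univ : Finset F))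
      (fun i t => psiF F (d i * t))]
  have hfac : ∀ i : Fin k, ∑ t : F, psiF F (d i * t) =
      if d i = 0 then (Fintype.card F : ℂ) else 0 := by
    intro i
    simp_rw [mul_comm (d i)]
    rw [AddChar.sum_mulShift (d i) (psiF_primitive F)]
    split_ifs <;> simp
  simp_rw [hfac]
  by_cases hd : d = 0
  · simp [hd, Finset.prod_const, Finset.card_univ]
  · have ⟨i, hi⟩ : ∃ i, d i ≠ 0 := by
      by_contra h; push_neg at h; exact hd (funext h)
    rw [if_neg hd]
    exact Finset.prod_eq_zero (Finset.mem_univ i) (by simp [hi])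

theorem FT_shift (n : ℕ) (f : (Fin n → F) → ℂ) (c y : Fin n → F) :
    FT F n (fun e => f (e - c)) y = chi F n y c * FT F n f y := by
  rw [FT, FT]
  have hre : ∑ e : Fin n → F, chi F n y e * f (e - c)
      = ∑ z : Fin n → F, chi F n y (z + c) * f z := by
    refine (Fintype.sum_equiv (Equiv.addRight c)
      (fun z => chi F n y (z + c) * f z) (fun e => chi F n y e * f (e - c)) ?_).symm
    intro z
    simp [Equiv.addRight]
  rw [hre]
  have hmul : ∀ z, chi F n y (z + c) = chi F n y z * chi F n y c := by
    intro z
    rw [chi_eq_psiF, chi_eq_psiF, chi_eq_psiF, add_dotProduct, AddChar.map_add_eq_mul]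
  simp_rw [hmul]
  rw [Finset.mul_sum, Finset.mul_sum, Finset.mul_sum]
  apply Finset.sum_congr rfl
  intro z _
  ring

theorem conj_mul_self_eq (z : ℂ) : (starRingEnd ℂ) z * z = ((‖z‖ ^ 2 : ℝ) : ℂ) := by
  rw [mul_comm, Complex.mul_conj, Complex.normSq_eq_norm_sq]

end PGMhelpers

/-- The vectors `Y_c = q^{-k/2} ∑_s χ_c(u_s) W̃_s` of the pretty good measurement are
pairwise orthonormal, and the overlap with `ψ̂_c` equals `q^{-k/2} ∑_s n_s`, hence its
squared modulus is `(1/q^k)(∑_s n_s)²`. -/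
theorem PGM_orthonormal_and_overlap (F : Type) [Field F] [Fintype F] [DecidableEq F]
    [Algebra (ZMod (ringChar F)) F] (n k : ℕ)
    (G : Matrix (Fin k) (Fin n) F) (hG : G.rank = k)
    (f : (Fin n → F) → ℂ) (hf : ∑ x : Fin n → F, ‖f x‖ ^ 2 = 1)
    (u : (Fin k → F) → (Fin n → F)) (hu : ∀ s, G.mulVec (u s) = s)
    (ns : (Fin k → F) → ℝ)
    (hns : ∀ s, ns s =
      Real.sqrt (∑ y : Fin n → F, if G.mulVec y = s then ‖FT F n f y‖ ^ 2 else 0))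
    (hpos : ∀ s, 0 < ns s)
    (Y : (Fin n → F) → (Fin n → F) → ℂ)
    (hY : ∀ c y, Y c y = (Real.sqrt ((Fintype.card F : ℝ) ^ k) : ℂ)⁻¹ *
      ∑ s : Fin k → F, chi F n c (u s) *
        (if G.mulVec y = s then FT F n f y / (ns s : ℂ) else 0)) :
    (∀ c c' : Fin n → F,
      (∃ m : Fin k → F, c = Matrix.vecMul m G) →
      (∃ m : Fin k → F, c' = Matrix.vecMul m G) →
      ∑ y : Fin n → F, (starRingEnd ℂ) (Y c y) * Y c' y =
        if c = c' then 1 else 0) ∧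
    (∀ c : Fin n → F, (∃ m : Fin k → F, c = Matrix.vecMul m G) →
      (∑ y : Fin n → F, (starRingEnd ℂ) (Y c y) * FT F n (fun e => f (e - c)) y =
        (Real.sqrt ((Fintype.card F : ℝ) ^ k) : ℂ)⁻¹ * ∑ s : Fin k → F, (ns s : ℂ)) ∧
      ‖∑ y : Fin n → F, (starRingEnd ℂ) (Y c y) * FT F n (fun e => f (e - c)) y‖ ^ 2 =
        (1 / (Fintype.card F : ℝ) ^ k) * (∑ s : Fin k → F, ns s) ^ 2) := by
  haveI hCP : CharP F (ringChar F) := ringChar.charP F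
  haveI : NeZero (ringChar F) := ⟨(CharP.char_is_prime F (ringChar F)).ne_zero⟩
  have hq0 : (0:ℝ) < (Fintype.card F : ℝ) := by
    exact_mod_cast Fintype.card_pos
  have hqk_pos : (0:ℝ) < (Fintype.card F : ℝ) ^ k := pow_pos hq0 k
  set A : ℂ := (Real.sqrt ((Fintype.card F : ℝ) ^ k) : ℂ)⁻¹ with hA
  have hA_conj : (starRingEnd ℂ) A = A := by
    rw [hA, map_inv₀, Complex.conj_ofReal]
  have hA2 : A * A = (((Fintype.card F : ℝ) ^ k : ℝ) : ℂ)⁻¹ := by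
    rw [hA, ← mul_inv, ← Complex.ofReal_mul, Real.mul_self_sqrt hqk_pos.le]
  have hAQ : A * A * ((Fintype.card F : ℂ)) ^ k = 1 := by
    rw [hA2, show (((Fintype.card F : ℝ) ^ k : ℝ) : ℂ) = ((Fintype.card F : ℂ)) ^ k by
      push_cast; ring]
    exact inv_mul_cancel₀ (pow_ne_zero _ (Nat.cast_ne_zero.mpr Fintype.card_ne_zero))
  have hfib : ∀ s, (∑ y : Fin n → F, if G.mulVec y = s then ‖FT F n f y‖ ^ 2 else 0)
      = ns s ^ 2 := by
    intro s
    rw [hns s, Real.sq_sqrt]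
    apply Finset.sum_nonneg
    intro y _
    split_ifs <;> positivity
  have hnsC : ∀ s, (ns s : ℂ) ≠ 0 := fun s => by exact_mod_cast (hpos s).ne'
  have hfibC : ∀ s, (∑ y : Fin n → F,
      if G.mulVec y = s then (starRingEnd ℂ) (FT F n f y) * FT F n f y else 0)
      = ((ns s : ℂ)) ^ 2 := by
    intro s
    have h1 : ∀ y : Fin n → F,
        (if G.mulVec y = s then (starRingEnd ℂ) (FT F n f y) * FT F n f y else 0)
        = (((if G.mulVec y = s then ‖FT F n f y‖ ^ 2 else 0 : ℝ)) : ℂ) := by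
      intro y
      split_ifs
      · rw [conj_mul_self_eq]
      · simp
    simp_rw [h1]
    exact_mod_cast congrArg Complex.ofReal (hfib s)
  have hY' : ∀ c y, Y c y =
      A * (chi F n c (u (G.mulVec y)) * (FT F n f y / (ns (G.mulVec y) : ℂ))) := by
    intro c y
    rw [hY c y]
    congr 1
    rw [Finset.sum_eq_single (G.mulVec y)]
    · simp
    · intro s _ hs
      rw [if_neg (Ne.symm hs), mul_zero]
    · intro h; exact absurd (Finset.mem_univ _) h
  have hchiC : ∀ (m : Fin k → F) (x : Fin n → F),
      chi F n (Matrix.vecMul m G) x = psiF F (dotProduct m (G.mulVec x)) := by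
    intro m x
    rw [chi_eq_psiF]
    congr 1
    rw [dotProduct_comm, Matrix.dotProduct_mulVec]
  have hregroup : ∀ (g : (Fin k → F) → ℂ) (w : (Fin n → F) → ℂ),
      ∑ y : Fin n → F, g (G.mulVec y) * w y
        = ∑ s : Fin k → F, g s * ∑ y : Fin n → F, (if G.mulVec y = s then w y else 0) := by
    intro g w
    have h1 : ∀ y : Fin n → F, g (G.mulVec y) * w y
        = ∑ s : Fin k → F, if G.mulVec y = s then g s * w y else 0 := by
      intro y
      rw [Finset.sum_ite_eq, if_pos (Finset.mem_univ _)]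
    simp_rw [h1]
    rw [Finset.sum_comm]
    refine Finset.sum_congr rfl fun s _ => ?_
    rw [Finset.mul_sum]
    exact Finset.sum_congr rfl fun y _ => by rw [mul_ite, mul_zero]
  constructor
  · rintro c c' ⟨m, rfl⟩ ⟨m', rfl⟩
    have hterm : ∀ y : Fin n → F,
        (starRingEnd ℂ) (Y (Matrix.vecMul m G) y) * Y (Matrix.vecMul m' G) y
          = (A * A) * (((starRingEnd ℂ) (chi F n (Matrix.vecMul m G) (u (G.mulVec y)))
              * chi F n (Matrix.vecMul m' G) (u (G.mulVec y)) / ((ns (G.mulVec y) : ℂ)) ^ 2)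
            * ((starRingEnd ℂ) (FT F n f y) * FT F n f y)) := by
      intro y
      rw [hY', hY', map_mul, map_mul, map_div₀, hA_conj, Complex.conj_ofReal]
      ring
    have e1 : ∑ y : Fin n → F,
        (starRingEnd ℂ) (Y (Matrix.vecMul m G) y) * Y (Matrix.vecMul m' G) y
        = (A * A) * ∑ s : Fin k → F, ((starRingEnd ℂ) (chi F n (Matrix.vecMul m G) (u s))
            * chi F n (Matrix.vecMul m' G) (u s)) := by
      simp_rw [hterm]
      rw [← Finset.mul_sum]
      congr 1
      rw [hregroup (fun s => (starRingEnd ℂ) (chi F n (Matrix.vecMul m G) (u s))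
            * chi F n (Matrix.vecMul m' G) (u s) / ((ns s : ℂ)) ^ 2)
          (fun y => (starRingEnd ℂ) (FT F n f y) * FT F n f y)]
      refine Finset.sum_congr rfl fun s _ => ?_
      rw [hfibC s]
      exact div_mul_cancel₀ _ (pow_ne_zero 2 (hnsC s))
    rw [e1]
    rcases eq_or_ne (Matrix.vecMul m G) (Matrix.vecMul m' G) with hcc | hcc
    · rw [if_pos hcc]
      have h1 : ∀ s : Fin k → F, (starRingEnd ℂ) (chi F n (Matrix.vecMul m G) (u s))
          * chi F n (Matrix.vecMul m' G) (u s) = 1 := by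
        intro s
        rw [← hcc, hchiC m, conj_psiF_self]
      simp_rw [h1]
      have h2 : ∑ _s : Fin k → F, (1:ℂ) = ((Fintype.card F : ℂ)) ^ k := by
        rw [Finset.sum_const, Finset.card_univ, nsmul_eq_mul, mul_one]
        norm_cast
        simp
      rw [h2, hAQ]
    · rw [if_neg hcc]
      have hd : m' - m ≠ 0 := by
        intro h
        rw [sub_eq_zero] at h
        exact hcc (by rw [h])
      have hsum0 : ∑ s : Fin k → F, (starRingEnd ℂ) (chi F n (Matrix.vecMul m G) (u s))
          * chi F n (Matrix.vecMul m' G) (u s) = 0 := by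
        have h3 : ∀ s : Fin k → F, (starRingEnd ℂ) (chi F n (Matrix.vecMul m G) (u s))
            * chi F n (Matrix.vecMul m' G) (u s)
            = psiF F (dotProduct (m' - m) s) := by
          intro s
          rw [hchiC m, hchiC m', hu s, conj_psiF_mul, sub_dotProduct]
        simp_rw [h3]
        rw [sum_psiF_dot F k (m' - m), if_neg hd]
      rw [hsum0, mul_zero]
  · rintro c ⟨m, rfl⟩
    have hterm2 : ∀ y : Fin n → F,
        (starRingEnd ℂ) (Y (Matrix.vecMul m G) y)
          * FT F n (fun e => f (e - Matrix.vecMul m G)) y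
        = A * (((ns (G.mulVec y) : ℂ))⁻¹
            * ((starRingEnd ℂ) (FT F n f y) * FT F n f y)) := by
      intro y
      rw [hY', FT_shift]
      have h1 : chi F n (Matrix.vecMul m G) (u (G.mulVec y)) =
          psiF F (dotProduct m (G.mulVec y)) := by
        rw [hchiC m, hu]
      have h2 : chi F n y (Matrix.vecMul m G) =
          psiF F (dotProduct m (G.mulVec y)) := by
        rw [chi_eq_psiF]
        congr 1
        rw [Matrix.dotProduct_mulVec]
      rw [h1, h2, map_mul, map_mul, map_div₀, hA_conj, Complex.conj_ofReal]
      have h3 := conj_psiF_self F (dotProduct m (G.mulVec y))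
      linear_combination (A * ((ns (G.mulVec y) : ℂ))⁻¹
        * ((starRingEnd ℂ) (FT F n f y) * FT F n f y)) * h3
    have hEq : ∑ y : Fin n → F, (starRingEnd ℂ) (Y (Matrix.vecMul m G) y)
          * FT F n (fun e => f (e - Matrix.vecMul m G)) y
        = A * ∑ s : Fin k → F, (ns s : ℂ) := by
      simp_rw [hterm2]
      rw [← Finset.mul_sum]
      congr 1
      rw [hregroup (fun s => ((ns s : ℂ))⁻¹)
          (fun y => (starRingEnd ℂ) (FT F n f y) * FT F n f y)]
      refine Finset.sum_congr rfl fun s _ => ?_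
      rw [hfibC s, sq, ← mul_assoc, inv_mul_cancel₀ (hnsC s), one_mul]
    refine ⟨hEq, ?_⟩
    rw [hEq]
    have hsum : ∑ s : Fin k → F, (ns s : ℂ) = ((∑ s : Fin k → F, ns s : ℝ) : ℂ) := by
      push_cast; rfl
    rw [hsum, norm_mul, hA, norm_inv]
    rw [Complex.norm_real, Complex.norm_real]
    rw [Real.norm_eq_abs, Real.norm_eq_abs, abs_of_nonneg (Real.sqrt_nonneg _)]
    rw [mul_pow, inv_pow, Real.sq_sqrt hqk_pos.le, sq_abs, one_div]
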